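/- Let K : F_N^+ × F_N^+ → ℂ be a kernel on the free monoid F_N^+ on N generators. Then K arises as the moment kernel K(σ,τ) = φ(π(X_σ)^+ π(X_τ)) of a linear functional φ on the *-algebra R generated by X_1,...,X_N, X_1^+,...,X_N^+ subject to the relations X_k^+ X_k = 1 (k = 1,...,N), if and only if K is invariant, i.e., K(τσ, τσ') = K(σ, σ') for all words τ, σ, σ' ∈ F_N^+. -/

import Mathlib

/-- A unital complex `*`-algebra generated by `N` "isometric" variables
`x k` (satisfying `(x k)⁺ x k = 1`) in which the monomials `x_σ`, `σ ∈ F_N⁺`,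
are linearly independent.  This models the algebra `R(𝒜_O^N)`, the quotient of the free
`*`-algebra by the relations `X_k⁺ X_k = 1`, together with its quotient map `π`
(given by `σ ↦ (σ.map x).prod`). -/
structure StarRep (N : ℕ) where
  A : Type
  [ringA : Ring A]
  [algebraA : Algebra ℂ A]
  [starRingA : StarRing A]
  [starModuleA : StarModule ℂ A]
  x : Fin N → A
  isometry : ∀ k, star (x k) * x k = 1
  indep : LinearIndependent ℂ fun σ : List (Fin N) => (σ.map x).prod

attribute [instance] StarRep.ringA StarRep.algebraA StarRep.starRingA StarRep.starModuleA

namespace Stmt7Aux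

variable {N : ℕ}

abbrev Λ (N : ℕ) := Sum (Fin N) (Fin N)

/-- cons with cancellation of the pattern `inr k, inl k`. -/
def cc : Λ N → List (Λ N) → List (Λ N)
  | Sum.inr k, Sum.inl l :: w => if k = l then w else Sum.inr k :: Sum.inl l :: w
  | a, w => a :: w

lemma cc_inl (k : Fin N) (w : List (Λ N)) : cc (Sum.inl k) w = Sum.inl k :: w := by
  cases w with
  | nil => rfl
  | cons b w => cases b <;> rfl

lemma cc_inr_cancel (k : Fin N) (w : List (Λ N)) :
    cc (Sum.inr k) (Sum.inl k :: w) = w := by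
  simp [cc]

lemma cc_inr_no (k : Fin N) (w : List (Λ N)) (h : ∀ j, w.head? ≠ some (Sum.inl j)) :
    cc (Sum.inr k) w = Sum.inr k :: w := by
  cases w with
  | nil => rfl
  | cons b w =>
    cases b with
    | inl j => exact absurd rfl (h j)
    | inr j => rfl

/-- Full reduction. -/
def reduce (l : List (Λ N)) : List (Λ N) := l.foldr cc []

lemma reduce_append (u v : List (Λ N)) : reduce (u ++ v) = u.foldr cc (reduce v) :=
  List.foldr_append ..

lemma reduce_inl (q : List (Fin N)) : reduce (q.map Sum.inl) = q.map Sum.inl := by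
  induction q with
  | nil => rfl
  | cons a q ih => simpa [reduce, List.foldr] using (cc_inl a _).trans (by rw [show List.foldr cc [] (q.map Sum.inl) = reduce (q.map Sum.inl) from rfl, ih])

lemma foldr_cc_inr (q : List (Fin N)) (w : List (Λ N)) (h : ∀ j, w.head? ≠ some (Sum.inl j)) :
    (q.map Sum.inr).foldr cc w = q.map Sum.inr ++ w := by
  induction q with
  | nil => rfl
  | cons a q ih =>
    have hh : ∀ j, (q.map Sum.inr ++ w).head? ≠ some (Sum.inl j) := by
      cases q with
      | nil => simpa using h
      | cons b q => simp
    simp only [List.map_cons, List.foldr_cons, ih]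
    rw [cc_inr_no a _ hh, List.cons_append]

lemma reduce_del (k : Fin N) (u v : List (Λ N)) :
    reduce (u ++ ([Sum.inr k, Sum.inl k] ++ v)) = reduce (u ++ v) := by
  rw [reduce_append u ([Sum.inr k, Sum.inl k] ++ v), reduce_append u v, reduce_append]
  congr 1
  show cc (Sum.inr k) (cc (Sum.inl k) (reduce v)) = reduce v
  rw [cc_inl, cc_inr_cancel]


/-! ### The congruence and the quotient monoid -/

def rel (N : ℕ) : FreeMonoid (Λ N) → FreeMonoid (Λ N) → Prop := fun a b =>
  ∃ k, a = FreeMonoid.ofList [Sum.inr k, Sum.inl k] ∧ b = 1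

def c (N : ℕ) : Con (FreeMonoid (Λ N)) := conGen (rel N)

abbrev M (N : ℕ) := (c N).Quotient

lemma reduce_of_rel {a b : FreeMonoid (Λ N)} (h : (c N) a b) :
    reduce a.toList = reduce b.toList := by
  have key : ∀ {a b : FreeMonoid (Λ N)}, ConGen.Rel (rel N) a b →
      ∀ u v : List (Λ N), reduce (u ++ a.toList ++ v) = reduce (u ++ b.toList ++ v) := by
    intro a b h
    induction h with
    | of x y hxy =>
      obtain ⟨k, hx, hy⟩ := hxy
      subst hx; subst hy
      intro u v
      show reduce (u ++ [Sum.inr k, Sum.inl k] ++ v) = reduce (u ++ [] ++ v)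
      rw [List.append_assoc, reduce_del, List.append_nil]
    | refl x => intro u v; rfl
    | symm _ ih => intro u v; exact (ih u v).symm
    | trans _ _ ih1 ih2 => intro u v; exact (ih1 u v).trans (ih2 u v)
    | mul _ _ ih1 ih2 =>
      intro u v
      rename_i w x y z _ _
      show reduce (u ++ (w.toList ++ y.toList) ++ v) = reduce (u ++ (x.toList ++ z.toList) ++ v)
      have e1 : u ++ (w.toList ++ y.toList) ++ v = (u ++ w.toList) ++ y.toList ++ v := by
        simp [List.append_assoc]
      have e2 : (u ++ w.toList) ++ z.toList ++ v = u ++ w.toList ++ (z.toList ++ v) := by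
        simp [List.append_assoc]
      have e3 : u ++ x.toList ++ (z.toList ++ v) = u ++ (x.toList ++ z.toList) ++ v := by
        simp [List.append_assoc]
      rw [e1, ih2, e2, ih1, e3]
  have := key h [] []
  rwa [List.nil_append, List.nil_append, List.append_nil, List.append_nil] at this

/-! ### Star -/

def sw : Λ N → Λ N := Sum.elim Sum.inr Sum.inl

lemma sw_sw (a : Λ N) : sw (sw a) = a := by cases a <;> rfl

def sstar (l : FreeMonoid (Λ N)) : FreeMonoid (Λ N) :=
  FreeMonoid.ofList ((l.toList.map sw).reverse)

lemma sstar_mul (u v : FreeMonoid (Λ N)) : sstar (u * v) = sstar v * sstar u := by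
  show FreeMonoid.ofList (((u.toList ++ v.toList).map sw).reverse)
      = FreeMonoid.ofList ((v.toList.map sw).reverse ++ (u.toList.map sw).reverse)
  rw [List.map_append, List.reverse_append]

lemma sstar_sstar (l : FreeMonoid (Λ N)) : sstar (sstar l) = l := by
  show FreeMonoid.ofList ((((l.toList.map sw).reverse).map sw).reverse) = l
  have hsw : sw ∘ sw = (id : Λ N → Λ N) := funext sw_sw
  rw [List.map_reverse, List.reverse_reverse, List.map_map, hsw, List.map_id]
  rfl

lemma sstar_rel {a b : FreeMonoid (Λ N)} (h : (c N) a b) : (c N) (sstar a) (sstar b) := by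
  induction h with
  | of x y hxy =>
    obtain ⟨k, hx, hy⟩ := hxy
    subst hx; subst hy
    exact ConGen.Rel.of _ _ ⟨k, rfl, rfl⟩
  | refl x => exact ConGen.Rel.refl _
  | symm _ ih => exact ConGen.Rel.symm ih
  | trans _ _ ih1 ih2 => exact (c N).trans ih1 ih2
  | mul _ _ ih1 ih2 =>
    rename_i w x y z _ _
    rw [sstar_mul, sstar_mul]
    exact (c N).mul ih2 ih1

instance : StarMul (M N) where
  star := Quotient.map sstar (fun _ _ h => sstar_rel h)
  star_involutive := by
    intro a
    induction a using Quotient.inductionOn with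
    | h l => exact congrArg (Quotient.mk _) (sstar_sstar l)
  star_mul := by
    intro a b
    induction a using Quotient.inductionOn with
    | h u =>
      induction b using Quotient.inductionOn with
      | h v => exact congrArg (Quotient.mk _) (sstar_mul u v)

lemma star_mk (l : FreeMonoid (Λ N)) :
    star ((l : M N)) = ((sstar l : FreeMonoid (Λ N)) : M N) := rfl


/-! ### The monoid algebra and its star structure -/

noncomputable def astar (f : MonoidAlgebra ℂ (M N)) : MonoidAlgebra ℂ (M N) :=
  f.coeff.sum fun m a => MonoidAlgebra.single (star m) (star a)

lemma astar_single (m : M N) (a : ℂ) :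
    astar (MonoidAlgebra.single m a) = MonoidAlgebra.single (star m) (star a) := by
  apply MonoidAlgebra.sum_single_index
  simp

lemma astar_zero : astar (0 : MonoidAlgebra ℂ (M N)) = 0 := Finsupp.sum_zero_index

lemma astar_add (f g : MonoidAlgebra ℂ (M N)) : astar (f + g) = astar f + astar g := by
  apply Finsupp.sum_add_index' <;> intros <;>
    simp [star_add, MonoidAlgebra.single_add]

lemma astar_smul (f : MonoidAlgebra ℂ (M N)) :
    ∀ r : ℂ, astar (r • f) = star r • astar f := by
  induction f using MonoidAlgebra.induction_on with
  | of g =>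
    intro r
    rw [MonoidAlgebra.of_apply, MonoidAlgebra.smul_single', astar_single, astar_single,
      MonoidAlgebra.smul_single']
    simp
  | add f g hf hg =>
    intro r
    rw [smul_add, astar_add, astar_add, hf, hg, smul_add]
  | smul s f hf =>
    intro r
    rw [smul_smul, hf, star_mul', mul_smul, hf]

lemma astar_astar (f : MonoidAlgebra ℂ (M N)) : astar (astar f) = f := by
  induction f using MonoidAlgebra.induction_on with
  | of g =>
    rw [MonoidAlgebra.of_apply, astar_single, astar_single, star_star]
    simp
  | add f g hf hg => rw [astar_add, astar_add, hf, hg]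
  | smul r f hf => rw [astar_smul, astar_smul, star_star, hf]

lemma astar_mul (f g : MonoidAlgebra ℂ (M N)) : astar (f * g) = astar g * astar f := by
  induction f using MonoidAlgebra.induction_on generalizing g with
  | of m =>
    induction g using MonoidAlgebra.induction_on with
    | of n =>
      rw [MonoidAlgebra.of_apply, MonoidAlgebra.of_apply,
        MonoidAlgebra.single_mul_single, astar_single, astar_single, astar_single,
        MonoidAlgebra.single_mul_single, star_mul]
      simp
    | add g g' hg hg' =>
      rw [mul_add, astar_add, astar_add, add_mul, hg, hg']
    | smul r g hg =>
      rw [mul_smul_comm, astar_smul, hg, astar_smul, smul_mul_assoc]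
  | add f f' hf hf' =>
    rw [add_mul, astar_add, astar_add, hf, hf', mul_add]
  | smul r f hf =>
    rw [smul_mul_assoc, astar_smul, hf, astar_smul, mul_smul_comm]

noncomputable instance : StarRing (MonoidAlgebra ℂ (M N)) where
  star := astar
  star_involutive := astar_astar
  star_mul := astar_mul
  star_add := astar_add

lemma star_single' (m : M N) (a : ℂ) :
    star (MonoidAlgebra.single m a) = MonoidAlgebra.single (star m) (star a) :=
  astar_single m a

noncomputable instance : StarModule ℂ (MonoidAlgebra ℂ (M N)) where
  star_smul r f := astar_smul f r

/-! ### Generators, monomials, independence -/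

noncomputable def xgen (k : Fin N) : MonoidAlgebra ℂ (M N) :=
  MonoidAlgebra.single ((FreeMonoid.ofList [Sum.inl k] : FreeMonoid (Λ N)) : M N) 1

def e (σ : List (Fin N)) : M N := ((FreeMonoid.ofList (σ.map Sum.inl) : FreeMonoid (Λ N)) : M N)

lemma e_nil : e ([] : List (Fin N)) = 1 := rfl

lemma e_cons (k : Fin N) (σ : List (Fin N)) :
    e (k :: σ) = ((FreeMonoid.ofList [Sum.inl k] : FreeMonoid (Λ N)) : M N) * e σ := by
  show ((FreeMonoid.ofList ([Sum.inl k] ++ σ.map Sum.inl) : FreeMonoid (Λ N)) : M N) = _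
  rw [FreeMonoid.ofList_append, Con.coe_mul]
  rfl

lemma monomial (σ : List (Fin N)) :
    ((σ.map xgen).prod : MonoidAlgebra ℂ (M N)) = MonoidAlgebra.single (e σ) 1 := by
  induction σ with
  | nil => rw [List.map_nil, List.prod_nil, e_nil, MonoidAlgebra.one_def]
  | cons k σ ih =>
    rw [List.map_cons, List.prod_cons, ih, xgen, MonoidAlgebra.single_mul_single, one_mul,
      e_cons]

lemma e_injective : Function.Injective (e (N := N)) := by
  intro σ τ h
  have h2 : (c N) (FreeMonoid.ofList (σ.map Sum.inl)) (FreeMonoid.ofList (τ.map Sum.inl)) :=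
    (Con.eq _).mp h
  have h3 := reduce_of_rel h2
  rw [show (FreeMonoid.ofList (σ.map Sum.inl)).toList = σ.map Sum.inl from rfl,
    show (FreeMonoid.ofList (τ.map Sum.inl)).toList = τ.map Sum.inl from rfl,
    reduce_inl, reduce_inl] at h3
  exact List.map_injective_iff.mpr Sum.inl_injective h3

lemma indep : LinearIndependent ℂ fun σ : List (Fin N) =>
    ((σ.map xgen).prod : MonoidAlgebra ℂ (M N)) := by
  have h1 : LinearIndependent ℂ fun m : M N => (MonoidAlgebra.single m 1 : MonoidAlgebra ℂ (M N)) :=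
    (MonoidAlgebra.basis (M N) ℂ).linearIndependent
  have h2 := h1.comp e e_injective
  rw [show (fun σ : List (Fin N) => ((σ.map xgen).prod : MonoidAlgebra ℂ (M N)))
      = fun σ => MonoidAlgebra.single (e σ) 1 from funext monomial]
  exact h2

lemma isometry (k : Fin N) : star (xgen k) * xgen k = (1 : MonoidAlgebra ℂ (M N)) := by
  rw [xgen, star_single']
  rw [show star ((FreeMonoid.ofList [Sum.inl k] : FreeMonoid (Λ N)) : M N)
      = ((FreeMonoid.ofList [Sum.inr k] : FreeMonoid (Λ N)) : M N) from rfl]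
  rw [MonoidAlgebra.single_mul_single, star_one, one_mul, ← Con.coe_mul]
  rw [show ((FreeMonoid.ofList [Sum.inr k] : FreeMonoid (Λ N)) *
        FreeMonoid.ofList [Sum.inl k] : FreeMonoid (Λ N))
      = FreeMonoid.ofList [Sum.inr k, Sum.inl k] from rfl]
  have : ((FreeMonoid.ofList [Sum.inr k, Sum.inl k] : FreeMonoid (Λ N)) : M N) = 1 := by
    rw [show (1 : M N) = ((1 : FreeMonoid (Λ N)) : M N) from rfl]
    exact (Con.eq _).mpr (ConGen.Rel.of _ _ ⟨k, rfl, rfl⟩)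
  rw [this, ← MonoidAlgebra.one_def]

/-! ### The functional -/

def parseL : List (Λ N) → Option (List (Fin N))
  | [] => some []
  | Sum.inl k :: l => (parseL l).map (k :: ·)
  | Sum.inr _ :: _ => none

def parseW : List (Λ N) → Option (List (Fin N) × List (Fin N))
  | [] => some ([], [])
  | Sum.inl k :: l => (parseL l).map (fun q => ([], k :: q))
  | Sum.inr k :: l => (parseW l).map (fun pq => (k :: pq.1, pq.2))

lemma parseL_inl (q : List (Fin N)) : parseL (q.map Sum.inl) = some q := by
  induction q with
  | nil => rfl
  | cons a q ih => simp [parseL, ih]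

lemma parseW_spec (p q : List (Fin N)) :
    parseW (p.map Sum.inr ++ q.map Sum.inl) = some (p, q) := by
  induction p with
  | nil =>
    cases q with
    | nil => rfl
    | cons a q => simp [parseW, parseL_inl]
  | cons a p ih => simp [parseW, ih]

def cV (K : List (Fin N) → List (Fin N) → ℂ) (l : List (Λ N)) : ℂ :=
  (parseW l).elim 0 (fun pq => K pq.1.reverse pq.2)

lemma cV_eq (K : List (Fin N) → List (Fin N) → ℂ) {l : List (Λ N)}
    {p q : List (Fin N)} (h : parseW l = some (p, q)) : cV K l = K p.reverse q := by
  rw [cV, h]; rfl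

noncomputable def cM (K : List (Fin N) → List (Fin N) → ℂ) : M N → ℂ :=
  Quotient.lift (fun l : FreeMonoid (Λ N) => cV K (reduce l.toList))
    (fun _ _ h => congrArg (cV K) (reduce_of_rel h))

noncomputable def phi (K : List (Fin N) → List (Fin N) → ℂ) :
    MonoidAlgebra ℂ (M N) →ₗ[ℂ] ℂ :=
  Finsupp.linearCombination ℂ (cM K) ∘ₗ (MonoidAlgebra.coeffLinearEquiv ℂ).toLinearMap

lemma phi_single (K : List (Fin N) → List (Fin N) → ℂ) (m : M N) :
    phi K (MonoidAlgebra.single m 1) = cM K m := by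
  have h := Finsupp.linearCombination_single (R := ℂ) (v := cM K) (1 : ℂ) m
  rw [one_smul] at h
  exact h

lemma cc_inr_ne {k l : Fin N} (h : k ≠ l) (w : List (Λ N)) :
    cc (Sum.inr k) (Sum.inl l :: w) = Sum.inr k :: Sum.inl l :: w := by
  simp [cc, h]

/-- The key computation. -/
lemma main_red (K : List (Fin N) → List (Fin N) → ℂ)
    (hK : ∀ τ σ σ' : List (Fin N), K (τ ++ σ) (τ ++ σ') = K σ σ') :
    ∀ σ τ : List (Fin N),
      cV K (reduce (σ.reverse.map Sum.inr ++ τ.map Sum.inl)) = K σ τ := by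
  intro σ
  induction σ with
  | nil =>
    intro τ
    have hp : parseW (τ.map Sum.inl) = some (([] : List (Fin N)), τ) := by
      simpa using parseW_spec [] τ
    rw [List.reverse_nil, List.map_nil, List.nil_append, reduce_inl,
      cV_eq K hp, List.reverse_nil]
  | cons k σ' ih =>
    intro τ
    have hsplit : (k :: σ').reverse.map Sum.inr ++ τ.map Sum.inl
        = σ'.reverse.map Sum.inr ++ (Sum.inr k :: τ.map Sum.inl) := by
      rw [List.reverse_cons, List.map_append]
      simp [List.append_assoc]
    have hred : reduce (Sum.inr k :: τ.map Sum.inl) = cc (Sum.inr k) (τ.map Sum.inl) := by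
      rw [show reduce (Sum.inr k :: τ.map Sum.inl)
          = cc (Sum.inr k) (reduce (τ.map Sum.inl)) from rfl, reduce_inl]
    rw [hsplit, reduce_append, hred]
    cases τ with
    | nil =>
      rw [List.map_nil, show cc (Sum.inr k) ([] : List (Λ N)) = [Sum.inr k] from rfl]
      rw [foldr_cc_inr σ'.reverse [Sum.inr k] (by simp)]
      have h1 : (σ'.reverse.map Sum.inr ++ [Sum.inr k] : List (Λ N))
          = ((k :: σ').reverse).map Sum.inr := by
        rw [List.reverse_cons, List.map_append]
        rfl
      have hp : parseW (((k :: σ').reverse).map Sum.inr)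
          = some ((k :: σ').reverse, ([] : List (Fin N))) := by
        simpa using parseW_spec ((k :: σ').reverse) []
      rw [h1, cV_eq K hp, List.reverse_reverse]
    | cons l τ' =>
      rw [List.map_cons]
      by_cases hkl : k = l
      · subst hkl
        rw [cc_inr_cancel k (τ'.map Sum.inl), ← reduce_inl τ', ← reduce_append, ih τ']
        exact (hK [k] σ' τ').symm
      · rw [cc_inr_ne hkl]
        rw [foldr_cc_inr σ'.reverse _ (by simp)]
        have h1 : (σ'.reverse.map Sum.inr ++ (Sum.inr k :: Sum.inl l :: τ'.map Sum.inl) : List (Λ N))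
            = ((k :: σ').reverse).map Sum.inr ++ (l :: τ').map Sum.inl := by
          rw [List.reverse_cons, List.map_append]
          simp
        rw [h1, cV_eq K (parseW_spec ((k :: σ').reverse) (l :: τ')), List.reverse_reverse]

end Stmt7Aux

namespace Stmt7Aux

lemma star_prod_self {N : ℕ} (S : StarRep N) :
    ∀ τ : List (Fin N), star ((τ.map S.x).prod) * (τ.map S.x).prod = 1 := by
  intro τ
  induction τ with
  | nil => simp
  | cons k τ ih =>
    rw [List.map_cons, List.prod_cons, star_mul, mul_assoc,
      ← mul_assoc (star (S.x k)), S.isometry, one_mul, ih]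

/-- The star representation used in the converse direction. -/
noncomputable def theRep (N : ℕ) : StarRep N where
  A := MonoidAlgebra ℂ (M N)
  x := xgen
  isometry := isometry
  indep := indep

lemma star_e (σ : List (Fin N)) :
    star (e σ) = ((FreeMonoid.ofList ((σ.reverse).map Sum.inr) : FreeMonoid (Λ N)) : M N) := by
  rw [show star (e σ)
      = ((sstar (FreeMonoid.ofList (σ.map Sum.inl)) : FreeMonoid (Λ N)) : M N) from rfl]
  congr 1
  show FreeMonoid.ofList (((σ.map Sum.inl).map sw).reverse) = _
  rw [List.map_map, show sw ∘ (Sum.inl : Fin N → Λ N) = Sum.inr from rfl, ← List.map_reverse]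

lemma moment (K : List (Fin N) → List (Fin N) → ℂ)
    (hK : ∀ τ σ σ' : List (Fin N), K (τ ++ σ) (τ ++ σ') = K σ σ') (σ τ : List (Fin N)) :
    K σ τ = phi K (star (((σ.map xgen).prod : MonoidAlgebra ℂ (M N))) * (τ.map xgen).prod) := by
  rw [monomial, monomial, star_single', star_one, MonoidAlgebra.single_mul_single, one_mul,
    star_e, e, ← Con.coe_mul]
  rw [show ((FreeMonoid.ofList (σ.reverse.map Sum.inr) : FreeMonoid (Λ N)) *
        FreeMonoid.ofList (τ.map Sum.inl) : FreeMonoid (Λ N))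
      = FreeMonoid.ofList (σ.reverse.map Sum.inr ++ τ.map Sum.inl) from rfl]
  rw [phi_single]
  rw [show cM K ((FreeMonoid.ofList (σ.reverse.map Sum.inr ++ τ.map Sum.inl) : FreeMonoid (Λ N)) : M N)
      = cV K (reduce (σ.reverse.map Sum.inr ++ τ.map Sum.inl)) from rfl]
  rw [main_red K hK σ τ]

end Stmt7Aux

/-- A kernel `K` on the free monoid `F_N⁺` is the moment kernel
`K(σ,τ) = φ(π(X_σ)⁺ π(X_τ))` of a linear functional `φ` on the `*`-algebra generated by
`X_1, …, X_N` subject to `X_k⁺ X_k = 1` if and only if `K` is invariant: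
`K(τσ, τσ') = K(σ, σ')` for all words `τ, σ, σ'`. -/
theorem stmt7 (N : ℕ) (K : List (Fin N) → List (Fin N) → ℂ) :
    (∃ (S : StarRep N) (φ : S.A →ₗ[ℂ] ℂ),
        ∀ σ τ : List (Fin N),
          K σ τ = φ (star ((σ.map S.x).prod) * (τ.map S.x).prod)) ↔
      ∀ τ σ σ' : List (Fin N), K (τ ++ σ) (τ ++ σ') = K σ σ' := by
  constructor
  · rintro ⟨S, φ, h⟩ τ σ σ'
    rw [h, h]
    congr 1
    rw [List.map_append, List.map_append, List.prod_append, List.prod_append, star_mul,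
      mul_assoc, ← mul_assoc (star ((τ.map S.x).prod)), Stmt7Aux.star_prod_self, one_mul]
  · intro hK
    exact ⟨Stmt7Aux.theRep N, Stmt7Aux.phi K, fun σ τ => Stmt7Aux.moment K hK σ τ⟩
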